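/- For the ladder n-level closed-loop system, let ψ be a closed-loop solution with ‖ψ(0)‖ = 1, let β ∈ (0,1), and suppose that for all t ≥ 0 one has |ψₙ(t)| ≥ β and |ψ_{n−1}(t)| ≥ |ψ_j(t)| for every 1 ≤ j ≤ n−2. Then for all t ≥ 0, d/dt V(ψ(t)) ≤ −(2 β k_{n−1}/(n−1)) · g(t) · V(ψ(t))^{(α_{n−1}+1)/2}, where g(t) = |cos(arg ψₙ(t) − arg ψ_{n−1}(t))|^{α_{n−1}+1}. -/

import Mathlib

open scoped BigOperators

/-- The real matrix `X_p` (embedded in ℂ) of the ladder system: entry `-1` at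
position `(p, p+1)` and entry `1` at position `(p+1, p)` (0-based indices),
all other entries `0`. -/
noncomputable def ladderX (n : ℕ) (p : ℕ) : Matrix (Fin n) (Fin n) ℂ :=
  Matrix.of fun i j =>
    if (i : ℕ) = p ∧ (j : ℕ) = p + 1 then -1
    else if (i : ℕ) = p + 1 ∧ (j : ℕ) = p then 1 else 0

/-- The control Hamiltonian `H_p = i X_p`. -/
noncomputable def ladderHc (n : ℕ) (p : ℕ) : Matrix (Fin n) (Fin n) ℂ :=
  Complex.I • ladderX n p

/-- `c_p(ψ) = |ψ_p| cos (arg ψ_{p+1} - arg ψ_p)` (0-based indices, so this is the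
`p`-th control channel coupling levels `p` and `p+1`); `arg 0 = 0` by convention. -/
noncomputable def ladderC (n : ℕ) (p : ℕ) (ψ : Fin n → ℂ) : ℝ :=
  if h : p + 1 < n then
    ‖ψ ⟨p, Nat.lt_of_succ_lt h⟩‖ *
      Real.cos ((ψ ⟨p + 1, h⟩).arg - (ψ ⟨p, Nat.lt_of_succ_lt h⟩).arg)
  else 0

/-- The feedback control `u_p(ψ) = k_p sign(c_p(ψ)) |c_p(ψ)|^{α_p}` (real power). -/
noncomputable def ladderU (n : ℕ) (k α : ℕ → ℝ) (p : ℕ) (ψ : Fin n → ℂ) : ℝ :=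
  k p * Real.sign (ladderC n p ψ) * |ladderC n p ψ| ^ (α p)

/-- A closed-loop solution: a continuously differentiable `ψ : [0,∞) → ℂⁿ` with
`i ψ'(t) = (H₀ + ∑_p u_p(ψ(t)) H_p) ψ(t)` for all `t ≥ 0`, where
`H₀ = diag(λ₁,…,λₙ)`. -/
def IsLadderSolution (n : ℕ) (lam : Fin n → ℝ) (k α : ℕ → ℝ)
    (ψ : ℝ → Fin n → ℂ) : Prop :=
  ContDiffOn ℝ 1 ψ (Set.Ici 0) ∧
  ∀ t ∈ Set.Ici (0 : ℝ),
    Complex.I • derivWithin ψ (Set.Ici 0) t =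
      (Matrix.diagonal (fun i => (lam i : ℂ)) +
        ∑ p ∈ Finset.range (n - 1), (ladderU n k α p (ψ t) : ℂ) • ladderHc n p).mulVec (ψ t)

lemma re_conj_mul (a b : ℂ) :
    ((starRingEnd ℂ) a * b).re = ‖a‖ * ‖b‖ * Real.cos (b.arg - a.arg) := by
  simp only [Complex.mul_re, Complex.conj_re, Complex.conj_im]
  rw [Real.cos_sub, ← Complex.norm_mul_cos_arg a, ← Complex.norm_mul_sin_arg a,
    ← Complex.norm_mul_cos_arg b, ← Complex.norm_mul_sin_arg b]
  ring

lemma ladderX_conj (n p : ℕ) (i j : Fin n) :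
    (starRingEnd ℂ) (ladderX n p i j) = - ladderX n p j i := by
  simp only [ladderX, Matrix.of_apply]
  split_ifs with h1 h2 h3 h4 <;> simp_all

lemma ladderM_herm (n : ℕ) (lam : Fin n → ℝ) (u : ℕ → ℝ) (i j : Fin n) :
    (starRingEnd ℂ) ((Matrix.diagonal (fun i => (lam i : ℂ)) +
      ∑ p ∈ Finset.range (n-1), (u p : ℂ) • ladderHc n p) i j)
    = (Matrix.diagonal (fun i => (lam i : ℂ)) +
      ∑ p ∈ Finset.range (n-1), (u p : ℂ) • ladderHc n p) j i := by
  simp only [Matrix.add_apply, Matrix.sum_apply, Matrix.smul_apply, ladderHc,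
    smul_eq_mul, map_add, map_sum, map_mul, Complex.conj_ofReal, Complex.conj_I,
    ladderX_conj, Matrix.diagonal_apply]
  rw [apply_ite (starRingEnd ℂ)]
  simp only [Complex.conj_ofReal, map_zero]
  congr 1
  · split_ifs with h1 h2 h3 <;> simp_all [h1]
  · apply Finset.sum_congr rfl; intro p _; ring

lemma hasDerivWithinAt_normSq_comp {f : ℝ → ℂ} {f' : ℂ} {s : Set ℝ} {x : ℝ}
    (hf : HasDerivWithinAt f f' s x) :
    HasDerivWithinAt (fun r => Complex.normSq (f r))
      (2 * ((starRingEnd ℂ) (f x) * f').re) s x := by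
  have hre : HasDerivWithinAt (fun r => (f r).re) f'.re s x := by
    have h := Complex.reCLM.hasFDerivAt.comp_hasDerivWithinAt x hf
    simp only [Function.comp_def, Complex.reCLM_apply] at h
    exact h
  have him : HasDerivWithinAt (fun r => (f r).im) f'.im s x := by
    have h := Complex.imCLM.hasFDerivAt.comp_hasDerivWithinAt x hf
    simp only [Function.comp_def, Complex.imCLM_apply] at h
    exact h
  have h2 := (hre.mul hre).add (him.mul him)
  have heq : (2 * ((starRingEnd ℂ) (f x) * f').re)
      = (f'.re * (f x).re + (f x).re * f'.re) + (f'.im * (f x).im + (f x).im * f'.im) := by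
    simp only [Complex.mul_re, Complex.conj_re, Complex.conj_im]
    ring
  rw [heq]
  simpa only [Complex.normSq_apply, Pi.add_def, Pi.mul_def] using h2

lemma ladder_norm_conserved (n : ℕ) (lam : Fin n → ℝ) (k α : ℕ → ℝ)
    (ψ : ℝ → Fin n → ℂ) (hψ : IsLadderSolution n lam k α ψ)
    {t : ℝ} (ht : t ∈ Set.Ici (0:ℝ)) :
    ∑ i, Complex.normSq (ψ t i) = ∑ i, Complex.normSq (ψ 0 i) := by
  have key : ∀ s ∈ Set.Ici (0:ℝ),
      HasDerivWithinAt (fun r => ∑ i, Complex.normSq (ψ r i)) 0 (Set.Ici 0) s := by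
    intro s hs
    have hD : HasDerivWithinAt ψ (derivWithin ψ (Set.Ici 0) s) (Set.Ici 0) s :=
      ((hψ.1.differentiableOn one_ne_zero) s hs).hasDerivWithinAt
    set D := derivWithin ψ (Set.Ici 0) s with hDdef
    set M := (Matrix.diagonal (fun i => (lam i : ℂ)) +
        ∑ p ∈ Finset.range (n - 1), (ladderU n k α p (ψ s) : ℂ) • ladderHc n p) with hM
    have hODE : Complex.I • D = M.mulVec (ψ s) := hψ.2 s hs
    have hDi : ∀ i, D i = -Complex.I * (M.mulVec (ψ s)) i := by
      intro i
      have h := congrFun hODE i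
      simp only [Pi.smul_apply, smul_eq_mul] at h
      rw [← h, neg_mul, ← mul_assoc, Complex.I_mul_I]
      ring
    have hherm : ∀ i j, (starRingEnd ℂ) (M i j) = M j i := by
      rw [hM]; exact ladderM_herm n lam _
    have hsum : HasDerivWithinAt (fun r => ∑ i, Complex.normSq (ψ r i))
        (∑ i, 2 * ((starRingEnd ℂ) (ψ s i) * D i).re) (Set.Ici 0) s :=
      HasDerivWithinAt.fun_sum fun i _ =>
        hasDerivWithinAt_normSq_comp (hasDerivWithinAt_pi.1 hD i)
    have hS : (starRingEnd ℂ) (∑ i, (starRingEnd ℂ) (ψ s i) * (M.mulVec (ψ s)) i)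
        = ∑ i, (starRingEnd ℂ) (ψ s i) * (M.mulVec (ψ s)) i := by
      simp only [Matrix.mulVec, dotProduct, Finset.mul_sum, map_sum, map_mul,
        Complex.conj_conj, hherm]
      rw [Finset.sum_comm]
      exact Finset.sum_congr rfl fun i _ => Finset.sum_congr rfl fun j _ => by ring
    have hSim : (∑ i, (starRingEnd ℂ) (ψ s i) * (M.mulVec (ψ s)) i).im = 0 :=
      Complex.conj_eq_iff_im.mp hS
    have hzero : (∑ i, 2 * ((starRingEnd ℂ) (ψ s i) * D i).re) = 0 := by
      have hterm : ∀ i, 2 * ((starRingEnd ℂ) (ψ s i) * D i).re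
          = 2 * ((starRingEnd ℂ) (ψ s i) * (M.mulVec (ψ s)) i).im := by
        intro i; rw [hDi i]
        simp only [Complex.mul_re, Complex.mul_im, Complex.neg_re, Complex.neg_im,
          Complex.I_re, Complex.I_im, Complex.conj_re, Complex.conj_im]
        ring
      simp only [hterm]
      rw [← Finset.mul_sum, ← Complex.im_sum, hSim, mul_zero]
    rw [hzero] at hsum
    exact hsum
  have hdiff : DifferentiableOn ℝ (fun r => ∑ i, Complex.normSq (ψ r i)) (Set.Ici 0) :=
    fun s hs => ((key s hs).differentiableWithinAt)
  have hsr0 : (ContinuousLinearMap.smulRight (1 : ℝ →L[ℝ] ℝ) (0:ℝ)) = 0 := by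
    ext x : 1; simp
  exact (convex_Ici (0:ℝ)).is_const_of_fderivWithin_eq_zero hdiff
    (fun s hs => by
      rw [(key s hs).hasFDerivWithinAt.fderivWithin ((uniqueDiffOn_Ici 0) s hs)]
      exact hsr0) ht Set.self_mem_Ici

set_option maxHeartbeats 2000000

/-- Let `ψ` be a closed-loop solution of the ladder n-level system
with `‖ψ(0)‖ = 1`, let `β ∈ (0,1)`, and suppose for all `t ≥ 0` that `|ψₙ(t)| ≥ β`
and `|ψ_{n-1}(t)| ≥ |ψ_j(t)|` for `1 ≤ j ≤ n-2` (0-based: components `0,…,n-3`).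
Then `d/dt V(ψ(t)) ≤ -(2 β k_{n-1}/(n-1)) g(t) V(ψ(t))^{(α_{n-1}+1)/2}` where
`g(t) = |cos(arg ψₙ(t) - arg ψ_{n-1}(t))|^{α_{n-1}+1}` (last control channel has
0-based index `n-2`). -/
theorem ladder_lyapunov_differential_inequality
    (n : ℕ) (hn : 2 ≤ n) (lam : Fin n → ℝ) (hlam : Function.Injective lam)
    (k α : ℕ → ℝ) (hk : ∀ p, p < n - 1 → 0 < k p)
    (hα : ∀ p, p < n - 1 → α p ∈ Set.Ioo (0 : ℝ) 1)
    (ψ : ℝ → Fin n → ℂ) (hψ : IsLadderSolution n lam k α ψ)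
    (hnorm : ∑ i, ‖ψ 0 i‖ ^ 2 = 1)
    (β : ℝ) (hβ : β ∈ Set.Ioo (0 : ℝ) 1)
    (hlow : ∀ t ∈ Set.Ici (0 : ℝ), β ≤ ‖ψ t ⟨n - 1, by omega⟩‖)
    (hdom : ∀ t ∈ Set.Ici (0 : ℝ), ∀ j : Fin n, (j : ℕ) < n - 2 →
      ‖ψ t j‖ ≤ ‖ψ t ⟨n - 2, by omega⟩‖) :
    ∀ t ∈ Set.Ici (0 : ℝ),
      derivWithin (fun s => 1 - ‖ψ s ⟨n - 1, by omega⟩‖ ^ 2) (Set.Ici 0) t ≤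
        -(2 * β * k (n - 2) / ((n : ℝ) - 1)) *
          (|Real.cos ((ψ t ⟨n - 1, by omega⟩).arg - (ψ t ⟨n - 2, by omega⟩).arg)| ^
            (α (n - 2) + 1)) *
          (1 - ‖ψ t ⟨n - 1, by omega⟩‖ ^ 2) ^ ((α (n - 2) + 1) / 2) := by
  obtain ⟨hβ0, hβ1⟩ := hβ
  have hmlt : n - 1 < n := by omega
  have hqlt : n - 2 < n := by omega
  intro t ht
  set m : Fin n := ⟨n - 1, hmlt⟩ with hmdef
  set q : Fin n := ⟨n - 2, hqlt⟩ with hqdef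
  have hmv : (m : ℕ) = n - 1 := rfl
  have hqv : (q : ℕ) = n - 2 := rfl
  -- abbreviations
  set k' : ℝ := k (n - 2) with hk'def
  set α' : ℝ := α (n - 2) with hα'def
  have hk'pos : 0 < k' := hk (n - 2) (by omega)
  obtain ⟨hα'0, hα'1⟩ := hα (n - 2) (by omega)
  set u : ℝ := ladderU n k α (n - 2) (ψ t) with hudef
  set c : ℝ := ladderC n (n - 2) (ψ t) with hcdef
  set a : ℝ := ‖ψ t m‖ with hadef
  set b : ℝ := ‖ψ t q‖ with hbdef
  set θ : ℝ := (ψ t m).arg - (ψ t q).arg with hθdef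
  have hn2 : n - 2 + 1 < n := by omega
  have hc_eq : c = b * Real.cos θ := by
    rw [hcdef, ladderC, dif_pos hn2]
    have h1 : (⟨n - 2 + 1, hn2⟩ : Fin n) = m := by
      apply Fin.ext; simp [hmv]; omega
    have h2 : (⟨n - 2, Nat.lt_of_succ_lt hn2⟩ : Fin n) = q := rfl
    rw [h1, h2]
  -- the matrix and derivative
  have hD : HasDerivWithinAt ψ (derivWithin ψ (Set.Ici 0) t) (Set.Ici 0) t :=
    ((hψ.1.differentiableOn one_ne_zero) t ht).hasDerivWithinAt
  set D := derivWithin ψ (Set.Ici 0) t with hDdef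
  set M := (Matrix.diagonal (fun i => (lam i : ℂ)) +
      ∑ p ∈ Finset.range (n - 1), (ladderU n k α p (ψ t) : ℂ) • ladderHc n p) with hMdef
  have hODE : Complex.I • D = M.mulVec (ψ t) := hψ.2 t ht
  have hDi : ∀ i, D i = -Complex.I * (M.mulVec (ψ t)) i := by
    intro i
    have h := congrFun hODE i
    simp only [Pi.smul_apply, smul_eq_mul] at h
    rw [← h, neg_mul, ← mul_assoc, Complex.I_mul_I]
    ring
  have hMentry : ∀ j : Fin n, M m j =
      (if j = m then (lam m : ℂ) else 0) + (if j = q then (u : ℂ) * Complex.I else 0) := by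
    intro j
    rw [hMdef]
    simp only [Matrix.add_apply, Matrix.sum_apply, Matrix.smul_apply, ladderHc,
      Matrix.smul_apply, smul_eq_mul, Matrix.diagonal_apply]
    congr 1
    · split_ifs with h1 h2 h3
      · rfl
      · exact absurd h1.symm h2
      · exact absurd h3.symm h1
      · rfl
    · rw [Finset.sum_eq_single (n - 2)]
      · simp only [ladderX, Matrix.of_apply, hmv]
        rw [if_neg (fun h => by omega)]
        by_cases hj : (j : ℕ) = n - 2
        · rw [if_pos ⟨by omega, hj⟩, if_pos (show j = q from Fin.ext (by rw [hj, hqv]))]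
          rw [hudef]; ring
        · rw [if_neg (fun h => hj h.2), if_neg (fun h => hj (by rw [h, hqv]))]
          ring
      · intro p hp hne
        have hp' : p < n - 1 := Finset.mem_range.mp hp
        have hXz : ladderX n p m j = 0 := by
          simp only [ladderX, Matrix.of_apply, hmv]
          rw [if_neg (fun h => by omega), if_neg (fun h => by omega)]
        rw [hXz]; ring
      · intro h
        exact absurd (Finset.mem_range.mpr (by omega)) h
  have hMvec : M.mulVec (ψ t) m = (lam m : ℂ) * ψ t m + (u : ℂ) * Complex.I * ψ t q := by
    have : M.mulVec (ψ t) m = ∑ j, M m j * ψ t j := rfl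
    rw [this]
    calc ∑ j, M m j * ψ t j
        = ∑ j, ((if j = m then (lam m : ℂ) * ψ t j else 0)
            + (if j = q then (u : ℂ) * Complex.I * ψ t j else 0)) := by
          refine Finset.sum_congr rfl fun j _ => ?_
          rw [hMentry j]
          split_ifs <;> ring
      _ = (lam m : ℂ) * ψ t m + (u : ℂ) * Complex.I * ψ t q := by
          rw [Finset.sum_add_distrib, Finset.sum_ite_eq' Finset.univ m,
            Finset.sum_ite_eq' Finset.univ q]
          simp
  have hDm : D m = -Complex.I * (lam m : ℂ) * ψ t m + (u : ℂ) * ψ t q := by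
    rw [hDi m, hMvec]
    linear_combination (-(u : ℂ) * ψ t q) * Complex.I_sq
  -- derivative of |ψ_m|^2
  have hder2 := hasDerivWithinAt_normSq_comp (hasDerivWithinAt_pi.1 hD m)
  have hre_val : 2 * ((starRingEnd ℂ) (ψ t m) * D m).re = 2 * u * (a * c) := by
    rw [hDm, mul_add, Complex.add_re]
    have h1 : ((starRingEnd ℂ) (ψ t m) * (-Complex.I * (lam m : ℂ) * ψ t m)).re = 0 := by
      simp only [Complex.mul_re, Complex.mul_im, Complex.conj_re, Complex.conj_im,
        Complex.neg_re, Complex.neg_im, Complex.I_re, Complex.I_im, Complex.ofReal_re,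
        Complex.ofReal_im]
      ring
    have h2 : ((starRingEnd ℂ) (ψ t m) * ((u : ℂ) * ψ t q)).re
        = u * (a * (b * Real.cos ((ψ t q).arg - (ψ t m).arg))) := by
      rw [show (starRingEnd ℂ) (ψ t m) * ((u : ℂ) * ψ t q)
          = (u : ℂ) * ((starRingEnd ℂ) (ψ t m) * ψ t q) by ring]
      rw [Complex.re_ofReal_mul, re_conj_mul]
      ring
    rw [h1, h2, hc_eq, show (ψ t q).arg - (ψ t m).arg = -θ by rw [hθdef]; ring,
      Real.cos_neg]
    ring
  rw [hre_val] at hder2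
  have hVder : HasDerivWithinAt (fun s => 1 - Complex.normSq (ψ s m))
      (-(2 * u * (a * c))) (Set.Ici 0) t := by
    simpa [Pi.sub_def] using (hasDerivWithinAt_const t (Set.Ici 0) (1 : ℝ)).sub hder2
  have hVd : derivWithin (fun s => 1 - Complex.normSq (ψ s m)) (Set.Ici 0) t
      = -(2 * u * (a * c)) := hVder.derivWithin ((uniqueDiffOn_Ici 0) t ht)
  -- norm conservation
  have hns : ∑ i, Complex.normSq (ψ t i) = 1 := by
    rw [ladder_norm_conserved n lam k α ψ hψ ht]
    simpa [← Complex.sq_norm] using hnorm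
  have hVsum : 1 - Complex.normSq (ψ t m)
      = ∑ i ∈ Finset.univ.erase m, Complex.normSq (ψ t i) := by
    have h := Finset.add_sum_erase Finset.univ (fun i => Complex.normSq (ψ t i))
      (Finset.mem_univ m)
    linarith [hns, h]
  have hV0 : 0 ≤ 1 - Complex.normSq (ψ t m) := by
    rw [hVsum]
    exact Finset.sum_nonneg fun i _ => Complex.normSq_nonneg _
  have hbnn : 0 ≤ b := norm_nonneg _
  have hN1 : (1 : ℝ) ≤ (n : ℝ) - 1 := by
    have : (2 : ℝ) ≤ (n : ℝ) := by exact_mod_cast hn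
    linarith
  have hVle : 1 - Complex.normSq (ψ t m) ≤ ((n : ℝ) - 1) * b ^ 2 := by
    rw [hVsum]
    have hb2 : ∀ i ∈ Finset.univ.erase m, Complex.normSq (ψ t i) ≤ b ^ 2 := by
      intro i hi
      have hne := Finset.ne_of_mem_erase hi
      have hival : (i : ℕ) ≠ n - 1 := fun h => hne (Fin.ext (by rw [h, hmv]))
      have hilt := i.isLt
      by_cases hin : (i : ℕ) = n - 2
      · have : i = q := Fin.ext (by rw [hin, hqv])
        rw [this, ← Complex.sq_norm]
      · have hlt : (i : ℕ) < n - 2 := by omega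
        have hd := hdom t ht i hlt
        calc Complex.normSq (ψ t i) = ‖ψ t i‖ ^ 2 := (Complex.sq_norm _).symm
          _ ≤ b ^ 2 := pow_le_pow_left₀ (norm_nonneg _) hd 2
    calc ∑ i ∈ Finset.univ.erase m, Complex.normSq (ψ t i)
        ≤ (Finset.univ.erase m).card • (b ^ 2) := Finset.sum_le_card_nsmul _ _ _ hb2
      _ = ((n : ℝ) - 1) * b ^ 2 := by
          rw [Finset.card_erase_of_mem (Finset.mem_univ m), Finset.card_univ,
            Fintype.card_fin, nsmul_eq_mul, Nat.cast_sub (by omega : 1 ≤ n)]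
          norm_num
  -- control algebra
  have hsgn : Real.sign c * c = |c| := by
    rcases lt_trichotomy c 0 with h | h | h
    · rw [Real.sign_of_neg h, abs_of_neg h]; ring
    · simp [h]
    · rw [Real.sign_of_pos h, abs_of_pos h]; ring
  have huc : u * c = k' * |c| ^ (α' + 1) := by
    have hne : α' + 1 ≠ 0 := by linarith
    rw [Real.rpow_add' (abs_nonneg c) hne, Real.rpow_one, hudef, ladderU, ← hcdef,
      ← hk'def, ← hα'def]
    calc k' * Real.sign c * |c| ^ α' * c = k' * (Real.sign c * c) * |c| ^ α' := by ring
      _ = k' * (|c| ^ α' * |c|) := by rw [hsgn]; ring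
  have hc_abs : |c| = b * |Real.cos θ| := by
    rw [hc_eq, abs_mul, abs_of_nonneg hbnn]
  set g' : ℝ := |Real.cos θ| ^ (α' + 1) with hg'def
  set b1 : ℝ := b ^ (α' + 1) with hb1def
  have hg'nn : 0 ≤ g' := Real.rpow_nonneg (abs_nonneg _) _
  have hb1nn : 0 ≤ b1 := Real.rpow_nonneg hbnn _
  have hfact : 2 * u * (a * c) = 2 * a * (k' * (b1 * g')) := by
    have hbg : |c| ^ (α' + 1) = b1 * g' := by
      rw [hc_abs, Real.mul_rpow hbnn (abs_nonneg _)]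
    calc 2 * u * (a * c) = 2 * a * (u * c) := by ring
      _ = 2 * a * (k' * (b1 * g')) := by rw [huc, hbg]
  -- the V-power bound
  set e : ℝ := (α' + 1) / 2 with hedef
  have he0 : 0 ≤ e := by rw [hedef]; linarith
  have hVe_le : (1 - Complex.normSq (ψ t m)) ^ e ≤ ((n : ℝ) - 1) * b1 := by
    calc (1 - Complex.normSq (ψ t m)) ^ e ≤ (((n : ℝ) - 1) * b ^ 2) ^ e :=
          Real.rpow_le_rpow hV0 hVle he0
      _ = ((n : ℝ) - 1) ^ e * (b ^ 2 : ℝ) ^ e :=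
          Real.mul_rpow (by linarith) (sq_nonneg b)
      _ = ((n : ℝ) - 1) ^ e * b1 := by
          congr 1
          rw [hb1def, ← Real.rpow_natCast b 2, ← Real.rpow_mul hbnn]
          congr 1
          rw [hedef]; push_cast; ring
      _ ≤ ((n : ℝ) - 1) * b1 := by
          apply mul_le_mul_of_nonneg_right _ hb1nn
          calc ((n : ℝ) - 1) ^ e ≤ ((n : ℝ) - 1) ^ (1 : ℝ) :=
                Real.rpow_le_rpow_of_exponent_le hN1 (by rw [hedef]; linarith)
            _ = (n : ℝ) - 1 := Real.rpow_one _
  have hVenn : 0 ≤ (1 - Complex.normSq (ψ t m)) ^ e := Real.rpow_nonneg hV0 _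
  have haβ : β ≤ a := hlow t ht
  -- final assembly
  have hgoal : derivWithin (fun s => 1 - Complex.normSq (ψ s m)) (Set.Ici 0) t ≤
      -(2 * β * k' / ((n : ℝ) - 1)) * g' * ((1 - Complex.normSq (ψ t m)) ^ e) := by
    rw [hVd, hfact]
    have hNpos : (0 : ℝ) < (n : ℝ) - 1 := by linarith
    have hC : 0 ≤ 2 * β * k' / ((n : ℝ) - 1) * g' :=
      mul_nonneg (div_nonneg (by positivity) hNpos.le) hg'nn
    have t1 : (2 * β * k' / ((n : ℝ) - 1)) * g' * ((1 - Complex.normSq (ψ t m)) ^ e)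
        ≤ (2 * β * k' / ((n : ℝ) - 1)) * g' * (((n : ℝ) - 1) * b1) :=
      mul_le_mul_of_nonneg_left hVe_le hC
    have t2 : (2 * β * k' / ((n : ℝ) - 1)) * g' * (((n : ℝ) - 1) * b1)
        = 2 * β * k' * (b1 * g') := by field_simp
    have t3 : 2 * β * k' * (b1 * g') ≤ 2 * a * k' * (b1 * g') := by
      apply mul_le_mul_of_nonneg_right _ (mul_nonneg hb1nn hg'nn)
      nlinarith
    linarith [t1, t2, t3]
  -- convert the goal
  simp only [← Complex.normSq_eq_norm_sq]
  have ha2 : a ^ 2 = Complex.normSq (ψ t m) := by rw [hadef]; exact Complex.sq_norm _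
  rw [ha2]
  exact hgoal
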